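/- arXiv:1806.09482 — 2 statements merged into one kernel-verified Lean document; each statement's English description precedes it below -/
import Mathlib

section
/- Let u : ℝⁿ → ℝ be convex and differentiable and let C ≥ 1. Suppose the engulfing property holds: for all x₁, x₂ and h > 0, if x₂ ∈ S_h(x₁) then S_h(x₁) ⊆ S_{Ch}(x₂). Set δ = 1/C². Then for any x₁, x₂ and heights h₁ ≤ h₂: if S_{δh₁}(x₁) ∩ S_{δh₂}(x₂) ≠ ∅, then S_{δh₁}(x₁) ⊆ S_{h₂}(x₂). Here S_h(x) = {z : u(z) < u(x) + ∇u(x)·(z − x) + h}. -/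
open scoped RealInnerProductSpace

/-- Sub-level set of `u` at `x` of height `h`. -/
def subLevel {n : ℕ} (u : EuclideanSpace ℝ (Fin n) → ℝ)
    (x : EuclideanSpace ℝ (Fin n)) (h : ℝ) : Set (EuclideanSpace ℝ (Fin n)) :=
  {z | u z < u x + ⟪gradient u x, z - x⟫ + h}

lemma subLevel_mono {n : ℕ} (u : EuclideanSpace ℝ (Fin n) → ℝ)
    (x : EuclideanSpace ℝ (Fin n)) {h h' : ℝ} (hh : h ≤ h') :
    subLevel u x h ⊆ subLevel u x h' := by
  intro z hz
  simp only [subLevel, Set.mem_setOf_eq] at *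
  linarith

lemma self_mem_subLevel {n : ℕ} (u : EuclideanSpace ℝ (Fin n) → ℝ)
    (x : EuclideanSpace ℝ (Fin n)) {h : ℝ} (hh : 0 < h) :
    x ∈ subLevel u x h := by
  simp [subLevel, hh]

/-- Lemma 4.3: from the engulfing property with constant `C`, setting
`δ = 1/C²`, if `h₁ ≤ h₂` and `S_{δh₁}(x₁) ∩ S_{δh₂}(x₂) ≠ ∅`, then
`S_{δh₁}(x₁) ⊆ S_{h₂}(x₂)`. -/
theorem stmt_3 {n : ℕ} (u : EuclideanSpace ℝ (Fin n) → ℝ)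
    (hconv : ConvexOn ℝ Set.univ u) (hdiff : Differentiable ℝ u)
    (C : ℝ) (hC : 1 ≤ C)
    (heng : ∀ (x₁ x₂ : EuclideanSpace ℝ (Fin n)) (h : ℝ), 0 < h →
      x₂ ∈ subLevel u x₁ h → subLevel u x₁ h ⊆ subLevel u x₂ (C * h))
    (x₁ x₂ : EuclideanSpace ℝ (Fin n)) (h₁ h₂ : ℝ) (hh₁ : 0 < h₁)
    (h₁₂ : h₁ ≤ h₂)
    (hint : (subLevel u x₁ ((1/C^2) * h₁) ∩
      subLevel u x₂ ((1/C^2) * h₂)).Nonempty) :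
    subLevel u x₁ ((1/C^2) * h₁) ⊆ subLevel u x₂ h₂ := by
  obtain ⟨z, hz₁, hz₂⟩ := hint
  have hCpos : (0 : ℝ) < C := lt_of_lt_of_le one_pos hC
  have hh₂ : 0 < h₂ := lt_of_lt_of_le hh₁ h₁₂
  have hδ₁ : 0 < (1/C^2) * h₁ := by positivity
  have hδ₂ : 0 < (1/C^2) * h₂ := by positivity
  have s1 : subLevel u x₁ ((1/C^2) * h₁) ⊆ subLevel u z (C * ((1/C^2) * h₁)) :=
    heng x₁ z _ hδ₁ hz₁
  have s2 : subLevel u z (C * ((1/C^2) * h₁)) ⊆ subLevel u z (C * ((1/C^2) * h₂)) :=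
    subLevel_mono u z (by gcongr)
  have hx₂ : x₂ ∈ subLevel u z (C * ((1/C^2) * h₂)) :=
    heng x₂ z _ hδ₂ hz₂ (self_mem_subLevel u x₂ hδ₂)
  have s3 : subLevel u z (C * ((1/C^2) * h₂)) ⊆ subLevel u x₂ (C * (C * ((1/C^2) * h₂))) :=
    heng z x₂ _ (by positivity) hx₂
  have key : C * (C * ((1/C^2) * h₂)) = h₂ := by field_simp
  intro w hw
  have := s3 (s2 (s1 hw))
  rwa [key] at this
end

section
/- Suppose a family of sets {S(x, h)} indexed by points x in a metric-measure-type setting satisfies: (monotonicity) S(x,h₁) ⊆ S(x,h₂) for h₁ ≤ h₂, and (Lemma-4.3 property) there is δ ∈ (0,1) such that for h₁ ≤ h₂, if S(x₁, δh₁) ∩ S(x₂, δh₂) ≠ ∅ then S(x₁, δh₁) ⊆ S(x₂, h₂). Let D be a finite set of points with assigned heights h_x ≤ r₀. Then there is a subset {x₁, …, x_m} ⊆ D such that the sets S(x_i, δh_{x_i}) are pairwise disjoint and D ⊆ ⋃_i S(x_i, h_{x_i}), provided additionally x ∈ S(x, δh_x) for every x. -/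
/-- Abstract Vitali covering lemma (Lemma 4.4): for a family of sets
`S(x,h)` that is monotone in `h`, satisfies the Lemma-4.3 property with
parameter `δ`, and with `x ∈ S(x, δh_x)`, any finite set `D` of points with
heights `h_x ≤ r₀` admits a subfamily with pairwise disjoint `δ`-shrunk sets
whose full sets cover `D`. -/
theorem stmt_14 {X : Type*} (S : X → ℝ → Set X) (δ r₀ : ℝ)
    (hδ₁ : 0 < δ) (hδ₂ : δ < 1) (hr₀ : 0 < r₀)
    (hmono : ∀ (x : X) (h₁ h₂ : ℝ), h₁ ≤ h₂ → S x h₁ ⊆ S x h₂)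
    (hprop : ∀ (x₁ x₂ : X) (h₁ h₂ : ℝ), 0 < h₁ → h₁ ≤ h₂ →
      (S x₁ (δ * h₁) ∩ S x₂ (δ * h₂)).Nonempty → S x₁ (δ * h₁) ⊆ S x₂ h₂)
    (D : Finset X) (hx : X → ℝ)
    (hhx : ∀ x ∈ D, 0 < hx x ∧ hx x ≤ r₀)
    (hself : ∀ x ∈ D, x ∈ S x (δ * hx x)) :
    ∃ T : Finset X, T ⊆ D ∧
      (∀ x ∈ T, ∀ y ∈ T, x ≠ y → Disjoint (S x (δ * hx x)) (S y (δ * hx y))) ∧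
      ∀ x ∈ D, ∃ y ∈ T, x ∈ S y (hx y) := by
  classical
  revert hhx hself
  induction D using Finset.strongInduction with
  | _ D ih =>
    intro hhx hself
    rcases D.eq_empty_or_nonempty with rfl | hne
    · exact ⟨∅, by simp, by simp, by simp⟩
    · obtain ⟨x₀, hx₀D, hmax⟩ := D.exists_max_image hx hne
      set D' := D.filter (fun y => Disjoint (S y (δ * hx y)) (S x₀ (δ * hx x₀))) with hD'
      have hx₀notin : x₀ ∉ D' := by
        simp only [hD', Finset.mem_filter, hx₀D, true_and]
        intro hdisj
        have := disjoint_self.mp hdisj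
        exact absurd (hself x₀ hx₀D) (by simp [this])
      have hss : D' ⊂ D := by
        refine ⟨Finset.filter_subset _ _, fun hsub => hx₀notin (hsub hx₀D)⟩
      obtain ⟨T', hT'sub, hT'disj, hT'cov⟩ := ih D' hss
        (fun x hxm => hhx x (Finset.filter_subset _ _ hxm))
        (fun x hxm => hself x (Finset.filter_subset _ _ hxm))
      refine ⟨insert x₀ T', ?_, ?_, ?_⟩
      · intro y hy
        rcases Finset.mem_insert.mp hy with rfl | hy
        · exact hx₀D
        · exact Finset.filter_subset _ _ (hT'sub hy)
      · intro a ha b hb hab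
        rcases Finset.mem_insert.mp ha with rfl | ha
        · rcases Finset.mem_insert.mp hb with rfl | hb
          · exact absurd rfl hab
          · exact ((Finset.mem_filter.mp (hT'sub hb)).2).symm
        · rcases Finset.mem_insert.mp hb with hb | hb
          · exact hb ▸ (Finset.mem_filter.mp (hT'sub ha)).2
          · exact hT'disj a ha b hb hab
      · intro x hxD
        by_cases hmem : x ∈ D'
        · obtain ⟨y, hy, hxy⟩ := hT'cov x hmem
          exact ⟨y, Finset.mem_insert_of_mem hy, hxy⟩
        · have hnd : ¬ Disjoint (S x (δ * hx x)) (S x₀ (δ * hx x₀)) := by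
            intro hdisj
            exact hmem (Finset.mem_filter.mpr ⟨hxD, hdisj⟩)
          have hne' := Set.not_disjoint_iff_nonempty_inter.mp hnd
          have hsub := hprop x x₀ (hx x) (hx x₀) (hhx x hxD).1 (hmax x hxD) hne'
          exact ⟨x₀, Finset.mem_insert_self _ _, hsub (hself x hxD)⟩
end
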